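/- arXiv:1609.03668 — 5 statements merged into one kernel-verified Lean document; each statement's English description precedes it below -/
import Mathlib

section
/- With C[i,j] the length of an LCS_{k+} of X[1..i] and Y[1..j], and match(i,j,l) = 1 if the length-l suffixes of X[1..i] and Y[1..j] are equal and 0 otherwise, for all k ≤ i ≤ m and k ≤ j ≤ n: C[i,j] = max({C[i,j-1], C[i-1,j]} ∪ {C[i-l, j-l] + l·match(i,j,l) : k ≤ l ≤ min(i,j)}), and C[i,j] = 0 if i < k or j < k. -/
variable {α : Type*} [DecidableEq α]

/-- `IsCSK k X Y L` : there is a common subsequence of `X` and `Y` of total length `L`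
consisting of matching chunks each of length at least `k`, with the chunks at
non-overlapping increasing positions in both strings (0-based starting positions). -/
def IsCSK (k : ℕ) (X Y : List α) (L : ℕ) : Prop :=
  ∃ (t : ℕ) (i j l : ℕ → ℕ),
    (∀ s < t, k ≤ l s) ∧
    (∀ s < t, i s + l s ≤ X.length) ∧
    (∀ s < t, j s + l s ≤ Y.length) ∧
    (∀ s < t, (X.drop (i s)).take (l s) = (Y.drop (j s)).take (l s)) ∧
    (∀ s, s + 1 < t → i s + l s ≤ i (s + 1) ∧ j s + l s ≤ j (s + 1)) ∧
    L = ∑ s ∈ Finset.range t, l s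

/-- The length of a longest common subsequence in at least `k` length substrings. -/
noncomputable def lcsK (k : ℕ) (X Y : List α) : ℕ :=
  sSup {L | IsCSK k X Y L}

/-- `matchF X Y i j l = 1` iff the length-`l` suffixes of `X[1..i]` and `Y[1..j]` are equal. -/
def matchF (X Y : List α) (i j l : ℕ) : ℕ :=
  if (X.take i).drop (i - l) = (Y.take j).drop (j - l) then 1 else 0

/-- `Lsuf X Y i j` : the length of the longest common suffix of `X[1..i]` and `Y[1..j]`. -/
noncomputable def Lsuf (X Y : List α) (i j : ℕ) : ℕ :=
  sSup {l | l ≤ i ∧ l ≤ j ∧ (X.take i).drop (i - l) = (Y.take j).drop (j - l)}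

/-- `Mtab k X Y i j = max_{k ≤ l ≤ L[i,j]} (C[i-l, j-l] + l)` if `L[i,j] ≥ k`, else `-1`. -/
noncomputable def Mtab (k : ℕ) (X Y : List α) (i j : ℕ) : ℤ :=
  if h : k ≤ Lsuf X Y i j then
    (Finset.Icc k (Lsuf X Y i j)).sup' (Finset.nonempty_Icc.mpr h)
      (fun l => (lcsK k (X.take (i - l)) (Y.take (j - l)) : ℤ) + l)
  else -1

section Aux

variable {α : Type*} [DecidableEq α]

private lemma tdt (L : List α) {a b m : ℕ} (h : a + b ≤ m) :
    ((L.take m).drop a).take b = (L.drop a).take b := by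
  rw [List.drop_take, List.take_take, min_eq_left (by omega)]

lemma isCSK_zero (k : ℕ) (X Y : List α) : IsCSK k X Y 0 :=
  ⟨0, id, id, id, by simp, by simp, by simp, by simp, by simp, by simp⟩

private lemma chainij {t : ℕ} {i j l : ℕ → ℕ}
    (hord : ∀ s, s + 1 < t → i s + l s ≤ i (s + 1) ∧ j s + l s ≤ j (s + 1)) :
    ∀ s' < t, ∀ s < s', i s + l s ≤ i s' ∧ j s + l s ≤ j s' := by
  intro s'
  induction s' with
  | zero => omega
  | succ n ih =>
    intro hn s hs
    have h2 := hord n (by omega)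
    rcases Nat.lt_or_ge s n with h | h
    · have := ih (by omega) s h
      constructor <;> omega
    · have hsn : s = n := by omega
      subst hsn
      constructor <;> omega

lemma IsCSK.le_length {k L : ℕ} {X Y : List α} (h : IsCSK k X Y L) : L ≤ X.length := by
  obtain ⟨t, i, j, l, hl, hX, hY, heq, hord, rfl⟩ := h
  rcases Nat.eq_zero_or_pos t with rfl | ht
  · simp
  obtain ⟨u, rfl⟩ : ∃ u, t = u + 1 := ⟨t - 1, by omega⟩
  have key : ∀ n < u + 1, ∑ s ∈ Finset.range (n + 1), l s ≤ i n + l n := by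
    intro n
    induction n with
    | zero => intro _; simp
    | succ n ih =>
      intro hn
      rw [Finset.sum_range_succ]
      have h1 := ih (by omega)
      have h2 := (hord n (by omega)).1
      omega
  have h1 := key u (by omega)
  have h2 := hX u (by omega)
  omega

lemma bddAbove_csk (k : ℕ) (X Y : List α) : BddAbove {L | IsCSK k X Y L} :=
  ⟨X.length, fun _ hL => hL.le_length⟩

lemma lcsK_mem (k : ℕ) (X Y : List α) : IsCSK k X Y (lcsK k X Y) :=
  Nat.sSup_mem ⟨0, by exact isCSK_zero k X Y⟩ (bddAbove_csk k X Y)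

lemma le_lcsK {k L : ℕ} {X Y : List α} (h : IsCSK k X Y L) : L ≤ lcsK k X Y :=
  le_csSup (bddAbove_csk k X Y) h

lemma IsCSK.mono {k L : ℕ} {X Y : List α} {i j i' j' : ℕ} (hi : i ≤ i') (hj : j ≤ j')
    (h : IsCSK k (X.take i) (Y.take j) L) : IsCSK k (X.take i') (Y.take j') L := by
  obtain ⟨t, a, b, l, hl, hX, hY, heq, hord, rfl⟩ := h
  have hX' : ∀ s < t, a s + l s ≤ i := by
    intro s hs; have := hX s hs; rw [List.length_take] at this; omega
  have hY' : ∀ s < t, b s + l s ≤ j := by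
    intro s hs; have := hY s hs; rw [List.length_take] at this; omega
  refine ⟨t, a, b, l, hl, ?_, ?_, ?_, hord, rfl⟩
  · intro s hs
    have h1 := hX s hs; have h2 := hX' s hs
    rw [List.length_take] at h1 ⊢; omega
  · intro s hs
    have h1 := hY s hs; have h2 := hY' s hs
    rw [List.length_take] at h1 ⊢; omega
  · intro s hs
    have h1 := hX' s hs; have h2 := hY' s hs
    rw [tdt X (show a s + l s ≤ i' by omega), tdt Y (show b s + l s ≤ j' by omega),
        ← tdt X (show a s + l s ≤ i by omega), ← tdt Y (show b s + l s ≤ j by omega)]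
    exact heq s hs

lemma lcsK_mono (k : ℕ) (X Y : List α) {i j i' j' : ℕ} (hi : i ≤ i') (hj : j ≤ j') :
    lcsK k (X.take i) (Y.take j) ≤ lcsK k (X.take i') (Y.take j') :=
  le_lcsK ((lcsK_mem k _ _).mono hi hj)

lemma IsCSK.append {k L : ℕ} {X Y : List α} {i j l : ℕ}
    (hkl : k ≤ l) (hli : l ≤ i) (hlj : l ≤ j) (hiX : i ≤ X.length) (hjY : j ≤ Y.length)
    (hmatch : (X.take i).drop (i - l) = (Y.take j).drop (j - l))
    (h : IsCSK k (X.take (i - l)) (Y.take (j - l)) L) :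
    IsCSK k (X.take i) (Y.take j) (L + l) := by
  obtain ⟨t, a, b, c, hl, hX, hY, heq, hord, rfl⟩ := h
  have hXlen : (X.take (i - l)).length = i - l := by rw [List.length_take]; omega
  have hYlen : (Y.take (j - l)).length = j - l := by rw [List.length_take]; omega
  have hX' : ∀ s < t, a s + c s ≤ i - l := by
    intro s hs; have := hX s hs; rw [hXlen] at this; exact this
  have hY' : ∀ s < t, b s + c s ≤ j - l := by
    intro s hs; have := hY s hs; rw [hYlen] at this; exact this
  refine ⟨t + 1, fun s => if s < t then a s else i - l,
    fun s => if s < t then b s else j - l,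
    fun s => if s < t then c s else l, ?_, ?_, ?_, ?_, ?_, ?_⟩
  · intro s hs
    by_cases h' : s < t
    · simpa [h'] using hl s h'
    · simp [h', hkl]
  · intro s hs
    rw [List.length_take]
    by_cases h' : s < t
    · have := hX' s h'; simp only [if_pos h']; omega
    · simp only [if_neg h']; omega
  · intro s hs
    rw [List.length_take]
    by_cases h' : s < t
    · have := hY' s h'; simp only [if_pos h']; omega
    · simp only [if_neg h']; omega
  · intro s hs
    by_cases h' : s < t
    · have h1 := hX' s h'
      have h2 := hY' s h'
      simp only [if_pos h']
      rw [tdt X (show a s + c s ≤ i by omega), tdt Y (show b s + c s ≤ j by omega),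
          ← tdt X (show a s + c s ≤ i - l by omega), ← tdt Y (show b s + c s ≤ j - l by omega)]
      exact heq s h'
    · simp only [if_neg h']
      rw [hmatch]
  · intro s hs
    by_cases h' : s + 1 < t
    · have h'' : s < t := by omega
      have := hord s h'
      simp only [if_pos h', if_pos h'']
      exact this
    · have h1 : s < t := by omega
      have h2 := hX' s h1
      have h3 := hY' s h1
      simp only [if_pos h1, if_neg h']
      omega
  · rw [Finset.sum_range_succ, if_neg (lt_irrefl t)]
    congr 1
    exact Finset.sum_congr rfl fun s hs => by rw [if_pos (Finset.mem_range.mp hs)]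

end Aux

/-- The dynamic-programming recurrence for `C[i,j] = lcsK k X[1..i] Y[1..j]`:
for `k ≤ i ≤ m` and `k ≤ j ≤ n`,
`C[i,j] = max({C[i,j-1], C[i-1,j], max_{k ≤ l ≤ min i j} (C[i-l,j-l] + l*match(i,j,l))})`,
and `C[i,j] = 0` when `i < k` or `j < k`. -/
theorem lcsK_recurrence (k : ℕ) (hk : 1 ≤ k) (X Y : List α) :
    (∀ i j : ℕ, ∀ (hki : k ≤ i) (_ : i ≤ X.length) (hkj : k ≤ j) (_ : j ≤ Y.length),
      lcsK k (X.take i) (Y.take j) =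
        max (max (lcsK k (X.take i) (Y.take (j - 1))) (lcsK k (X.take (i - 1)) (Y.take j)))
          ((Finset.Icc k (min i j)).sup' (Finset.nonempty_Icc.mpr (le_min hki hkj))
            (fun l => lcsK k (X.take (i - l)) (Y.take (j - l)) + l * matchF X Y i j l))) ∧
    (∀ i j : ℕ, i < k ∨ j < k → lcsK k (X.take i) (Y.take j) = 0) := by
  constructor
  · intro i j hki hiX hkj hjY
    apply le_antisymm
    · -- lcsK ≤ RHS
      obtain ⟨t, a, b, c, hl, hX, hY, heq, hord, hsum⟩ := lcsK_mem k (X.take i) (Y.take j)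
      rcases Nat.eq_zero_or_pos t with rfl | ht
      · rw [hsum, Finset.sum_range_zero]; exact Nat.zero_le _
      obtain ⟨u, rfl⟩ : ∃ v, t = v + 1 := ⟨t - 1, by omega⟩
      have hchain := chainij hord
      have hX' : ∀ s < u + 1, a s + c s ≤ i := by
        intro s hs; have := hX s hs; rw [List.length_take] at this; omega
      have hY' : ∀ s < u + 1, b s + c s ≤ j := by
        intro s hs; have := hY s hs; rw [List.length_take] at this; omega
      rcases Nat.lt_or_ge (a u + c u) i with hlt | hge
      · -- last chunk ends before i : drop last column
        refine le_trans ?_ ((le_max_right _ _).trans (le_max_left _ _))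
        apply le_lcsK
        have key : ∀ s < u + 1, a s + c s ≤ i - 1 := by
          intro s hs
          rcases Nat.lt_or_ge s u with h | h
          · have := (hchain u (by omega) s h).1; omega
          · have hs' : s = u := by omega
            subst hs'
            omega
        refine ⟨u + 1, a, b, c, hl, ?_, hY, ?_, hord, hsum⟩
        · intro s hs
          have := key s hs; rw [List.length_take]; omega
        · intro s hs
          have h1 := key s hs
          rw [tdt X (show a s + c s ≤ i - 1 from h1), ← tdt X (show a s + c s ≤ i by omega)]
          exact heq s hs
      rcases Nat.lt_or_ge (b u + c u) j with hltb | hgeb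
      · -- last chunk ends before j : drop last row
        refine le_trans ?_ ((le_max_left _ _).trans (le_max_left _ _))
        apply le_lcsK
        have key : ∀ s < u + 1, b s + c s ≤ j - 1 := by
          intro s hs
          rcases Nat.lt_or_ge s u with h | h
          · have := (hchain u (by omega) s h).2; omega
          · have hs' : s = u := by omega
            subst hs'
            omega
        refine ⟨u + 1, a, b, c, hl, hX, ?_, ?_, hord, hsum⟩
        · intro s hs
          have := key s hs; rw [List.length_take]; omega
        · intro s hs
          have h1 := key s hs
          rw [tdt Y (show b s + c s ≤ j - 1 from h1), ← tdt Y (show b s + c s ≤ j by omega)]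
          exact heq s hs
      · -- last chunk is a common suffix of length c u
        have hXu := hX' u (by omega)
        have hYu := hY' u (by omega)
        have hai : a u + c u = i := by omega
        have hbj : b u + c u = j := by omega
        have hkl := hl u (by omega)
        have e1 : ((X.take i).drop (a u)).take (c u) = (X.take i).drop (a u) :=
          List.take_of_length_le (by rw [List.length_drop, List.length_take]; omega)
        have e2 : ((Y.take j).drop (b u)).take (c u) = (Y.take j).drop (b u) :=
          List.take_of_length_le (by rw [List.length_drop, List.length_take]; omega)
        have hmatch : (X.take i).drop (i - c u) = (Y.take j).drop (j - c u) := by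
          rw [show i - c u = a u by omega, show j - c u = b u by omega, ← e1, ← e2]
          exact heq u (by omega)
        have hm1 : matchF X Y i j (c u) = 1 := if_pos hmatch
        have htrunc : IsCSK k (X.take (i - c u)) (Y.take (j - c u))
            (∑ s ∈ Finset.range u, c s) := by
          refine ⟨u, a, b, c, fun s hs => hl s (by omega), ?_, ?_,
            ?_, fun s hs => hord s (by omega), rfl⟩
          · intro s hs
            have := (hchain u (by omega) s hs).1
            rw [List.length_take]; omega
          · intro s hs
            have := (hchain u (by omega) s hs).2
            rw [List.length_take]; omega
          · intro s hs
            have h1 := (hchain u (by omega) s hs).1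
            have h2 := (hchain u (by omega) s hs).2
            rw [tdt X (show a s + c s ≤ i - c u by omega),
                tdt Y (show b s + c s ≤ j - c u by omega),
                ← tdt X (show a s + c s ≤ i by omega),
                ← tdt Y (show b s + c s ≤ j by omega)]
            exact heq s (by omega)
        refine le_trans ?_ (le_max_right _ _)
        refine le_trans ?_ (Finset.le_sup' _
          (Finset.mem_Icc.mpr ⟨hkl, le_min (by omega) (by omega)⟩))
        rw [hm1, mul_one, hsum, Finset.sum_range_succ]
        have := le_lcsK htrunc
        omega
    · -- RHS ≤ lcsK
      apply max_le
      · apply max_le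
        · exact lcsK_mono k X Y le_rfl (by omega)
        · exact lcsK_mono k X Y (by omega) le_rfl
      · apply Finset.sup'_le
        intro l hli'
        obtain ⟨hkl, hlm⟩ := Finset.mem_Icc.mp hli'
        rw [le_min_iff] at hlm
        by_cases hm : (X.take i).drop (i - l) = (Y.take j).drop (j - l)
        · rw [show matchF X Y i j l = 1 from if_pos hm, mul_one]
          exact le_lcsK ((lcsK_mem k _ _).append hkl hlm.1 hlm.2 hiX hjY hm)
        · rw [show matchF X Y i j l = 0 from if_neg hm, mul_zero, add_zero]
          exact lcsK_mono k X Y (Nat.sub_le i l) (Nat.sub_le j l)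
  · -- boundary: 0 when i < k or j < k
    intro i j hij
    have h0 : ∀ L ∈ {L | IsCSK k (X.take i) (Y.take j) L}, L ≤ 0 := by
      intro L hL
      obtain ⟨t, a, b, c, hl, hX, hY, heq, hord, rfl⟩ := hL
      rcases Nat.eq_zero_or_pos t with rfl | ht
      · simp
      exfalso
      have h1 := hl 0 ht
      have h2 := hX 0 ht
      have h3 := hY 0 ht
      rw [List.length_take] at h2 h3
      rcases hij with h | h <;> omega
    exact Nat.le_zero.mp (csSup_le ⟨0, by exact isCSK_zero k _ _⟩ h0)
end

section
/- With L[i,j] = max{l : length-l suffixes of X[1..i] and Y[1..j] are equal}, C[i,j] the LCS_{k+} length of the prefixes, and M[i,j] = max_{k ≤ l ≤ L[i,j]} (C[i-l, j-l] + l) when L[i,j] ≥ k (and M[i,j] = -1 otherwise): if L[i,j] > k then M[i,j] = max(M[i-1,j-1] + 1, C[i-k, j-k] + k). -/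
variable {α : Type*} [DecidableEq α]

/-- the set defining `Lsuf`. -/
def SufSet (X Y : List α) (i j : ℕ) : Set ℕ :=
  {l | l ≤ i ∧ l ≤ j ∧ (X.take i).drop (i - l) = (Y.take j).drop (j - l)}

lemma sufset_rewrite (X : List α) (i l : ℕ) (hl : l ≤ i) :
    (X.take i).drop (i - l) = (X.drop (i - l)).take l := by
  rw [List.drop_take]; congr 1; omega

lemma sufset_down {X Y : List α} {i j l l' : ℕ} (hl : l' ≤ l) (hmem : l ∈ SufSet X Y i j) :
    l' ∈ SufSet X Y i j := by
  obtain ⟨h1, h2, h3⟩ := hmem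
  refine ⟨by omega, by omega, ?_⟩
  have := congrArg (List.drop (l - l')) h3
  rwa [List.drop_drop, List.drop_drop, show i - l + (l - l') = i - l' by omega,
    show j - l + (l - l') = j - l' by omega] at this

lemma sufset_zero (X Y : List α) (i j : ℕ) : 0 ∈ SufSet X Y i j := by
  refine ⟨Nat.zero_le _, Nat.zero_le _, ?_⟩
  simp [List.drop_take]

lemma sufset_bdd (X Y : List α) (i j : ℕ) : BddAbove (SufSet X Y i j) :=
  ⟨i, fun l hl => hl.1⟩

lemma mem_sufset_iff {X Y : List α} {i j l : ℕ} :
    l ∈ SufSet X Y i j ↔ l ≤ Lsuf X Y i j := by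
  constructor
  · intro hmem
    exact le_csSup (sufset_bdd X Y i j) hmem
  · intro hle
    exact sufset_down hle (Nat.sSup_mem ⟨0, sufset_zero X Y i j⟩ (sufset_bdd X Y i j))

lemma sufset_step {X Y : List α} {i j : ℕ} (hL : 1 ≤ Lsuf X Y i j) (l : ℕ) :
    l ∈ SufSet X Y (i - 1) (j - 1) ↔ l + 1 ∈ SufSet X Y i j := by
  have h1 : (1 : ℕ) ∈ SufSet X Y i j := mem_sufset_iff.mpr hL
  obtain ⟨hi1, hj1, hsuf1⟩ := h1
  rw [sufset_rewrite X i 1 hi1, sufset_rewrite Y j 1 hj1] at hsuf1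
  have hlast : X[i-1]?.toList = Y[j-1]?.toList := by
    have e1 : (X.drop (i - 1)).take 1 = X[i-1]?.toList := by
      rw [show (1:ℕ) = 0 + 1 from rfl, List.take_succ, List.getElem?_drop]
      simp
    have e2 : (Y.drop (j - 1)).take 1 = Y[j-1]?.toList := by
      rw [show (1:ℕ) = 0 + 1 from rfl, List.take_succ, List.getElem?_drop]
      simp
    rw [e1, e2] at hsuf1; exact hsuf1
  constructor
  · rintro ⟨ha, hb, hc⟩
    refine ⟨by omega, by omega, ?_⟩
    rw [sufset_rewrite X (i-1) l ha, sufset_rewrite Y (j-1) l hb] at hc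
    rw [sufset_rewrite X i (l+1) (by omega), sufset_rewrite Y j (l+1) (by omega),
      show i - (l+1) = i - 1 - l by omega, show j - (l+1) = j - 1 - l by omega,
      List.take_succ, List.take_succ, hc, List.getElem?_drop, List.getElem?_drop,
      show i - 1 - l + l = i - 1 by omega, show j - 1 - l + l = j - 1 by omega, hlast]
  · rintro ⟨ha, hb, hc⟩
    refine ⟨by omega, by omega, ?_⟩
    rw [sufset_rewrite X i (l+1) (by omega), sufset_rewrite Y j (l+1) (by omega),
      show i - (l+1) = i - 1 - l by omega, show j - (l+1) = j - 1 - l by omega] at hc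
    rw [sufset_rewrite X (i-1) l (by omega), sufset_rewrite Y (j-1) l (by omega)]
    have := congrArg (List.take l) hc
    simp only [List.take_take] at this
    rwa [show l ⊓ (l + 1) = l by omega] at this

lemma Lsuf_pred {X Y : List α} {i j : ℕ} (hL : 1 ≤ Lsuf X Y i j) :
    Lsuf X Y (i - 1) (j - 1) = Lsuf X Y i j - 1 := by
  apply le_antisymm
  · have h1 : Lsuf X Y (i-1) (j-1) ∈ SufSet X Y (i-1) (j-1) :=
      mem_sufset_iff.mpr le_rfl
    have := mem_sufset_iff.mp ((sufset_step hL _).mp h1)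
    omega
  · have h1 : Lsuf X Y i j - 1 + 1 ∈ SufSet X Y i j := by
      rw [show Lsuf X Y i j - 1 + 1 = Lsuf X Y i j by omega]
      exact mem_sufset_iff.mpr le_rfl
    exact mem_sufset_iff.mp ((sufset_step hL _).mpr h1)

/-- If `L[i,j] > k` then `M[i,j] = max(M[i-1,j-1] + 1, C[i-k,j-k] + k)`. -/
theorem Mtab_recurrence_of_lt (k : ℕ) (hk : 1 ≤ k) (X Y : List α) (i j : ℕ)
    (him : i ≤ X.length) (hjn : j ≤ Y.length) (h : k < Lsuf X Y i j) :
    Mtab k X Y i j =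
      max (Mtab k X Y (i - 1) (j - 1) + 1)
        ((lcsK k (X.take (i - k)) (Y.take (j - k)) : ℤ) + k) := by
  set L := Lsuf X Y i j with hLdef
  have hk' : k ≤ L := h.le
  have hL1 : 1 ≤ L := by omega
  have hpred : Lsuf X Y (i - 1) (j - 1) = L - 1 := Lsuf_pred hL1
  have hk2 : k ≤ L - 1 := by omega
  simp only [Mtab, hpred, ← hLdef, dif_pos hk', dif_pos hk2]
  have hne' : (Finset.Icc (k + 1) L).Nonempty := Finset.nonempty_Icc.mpr h
  have hmap : Finset.Icc (k + 1) L = (Finset.Icc k (L - 1)).map (addRightEmbedding 1) := by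
    rw [Finset.map_add_right_Icc]
    congr 1
    omega
  have hright :
      (Finset.Icc k (L - 1)).sup' (Finset.nonempty_Icc.mpr hk2)
          (fun l => (lcsK k (X.take (i - 1 - l)) (Y.take (j - 1 - l)) : ℤ) + l) + 1 =
        (Finset.Icc (k + 1) L).sup' hne'
          (fun l => (lcsK k (X.take (i - l)) (Y.take (j - l)) : ℤ) + l) := by
    rw [Finset.sup'_add]
    conv_rhs => rw [Finset.sup'_congr hne' hmap (fun l _ => rfl)]
    rw [Finset.sup'_map]
    apply Finset.sup'_congr _ rfl
    intro l hl
    simp only [Function.comp_apply, addRightEmbedding_apply]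
    rw [show i - (l + 1) = i - 1 - l by omega, show j - (l + 1) = j - 1 - l by omega]
    push_cast
    ring
  rw [hright]
  have hins : Finset.Icc k L = insert k (Finset.Icc (k + 1) L) := by
    rw [Finset.Icc_add_one_left_eq_Ioc, Finset.Ioc_insert_left hk']
  rw [Finset.sup'_congr _ hins (fun l _ => rfl), Finset.sup'_insert hne', max_comm]
end

section
/- For strings S₁, S₂ and indices 1 ≤ i₁ ≤ |S₁|, 1 ≤ i₂ ≤ |S₂|, the order-preserving longest common extension satisfies opLCE(i₁, i₂; S₁, S₂) = min( Z_{(S₁·S₂)[i₁..]}[|S₁| - i₁ + i₂ + 1], |S₁| - i₁ + 1 ), where Z_S[i] = max{l : S[1..l] ≈ S[i..i+l-1]} is the Z-table of S under order-isomorphism. -/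
variable {α : Type*} [LinearOrder α]

/-- Order-isomorphism of strings modeled as lists: same length, and corresponding
pairs of positions compare the same way. -/
def OIL (S T : List α) : Prop :=
  S.length = T.length ∧
    ∀ (p q : Fin S.length) (p' q' : Fin T.length),
      (p : ℕ) = (p' : ℕ) → (q : ℕ) = (q' : ℕ) →
        (S.get p ≤ S.get q ↔ T.get p' ≤ T.get q')

/-- `opLCE S₁ S₂ i₁ i₂` (1-based indices): the length of the longest
order-isomorphic extension `S₁[i₁..i₁+l-1] ≈ S₂[i₂..i₂+l-1]`. -/
noncomputable def opLCE (S₁ S₂ : List α) (i₁ i₂ : ℕ) : ℕ :=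
  sSup {l | i₁ - 1 + l ≤ S₁.length ∧ i₂ - 1 + l ≤ S₂.length ∧
    OIL ((S₁.drop (i₁ - 1)).take l) ((S₂.drop (i₂ - 1)).take l)}

/-- The `Z`-table under order-isomorphism: `Ztab S i = max {l : S[1..l] ≈ S[i..i+l-1]}`
(1-based index `i`). -/
noncomputable def Ztab (S : List α) (i : ℕ) : ℕ :=
  sSup {l | i - 1 + l ≤ S.length ∧ OIL (S.take l) ((S.drop (i - 1)).take l)}

lemma OIL_nil : OIL ([] : List α) [] := ⟨rfl, fun p _ _ _ _ _ => absurd p.2 (by simp)⟩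

lemma OIL.take {S T : List α} (h : OIL S T) (l : ℕ) : OIL (S.take l) (T.take l) := by
  obtain ⟨hlen, hget⟩ := h
  refine ⟨by simp [hlen], ?_⟩
  intro p q p' q' hp hq
  have hp1 : (p : ℕ) < S.length := lt_of_lt_of_le p.2 (by simp)
  have hq1 : (q : ℕ) < S.length := lt_of_lt_of_le q.2 (by simp)
  have hp2 : (p' : ℕ) < T.length := lt_of_lt_of_le p'.2 (by simp)
  have hq2 : (q' : ℕ) < T.length := lt_of_lt_of_le q'.2 (by simp)
  have := hget ⟨p, hp1⟩ ⟨q, hq1⟩ ⟨p', hp2⟩ ⟨q', hq2⟩ hp hq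
  simpa [List.get_eq_getElem, List.getElem_take] using this


/-- `opLCE(i₁,i₂;S₁,S₂) = min( Z_{(S₁·S₂)[i₁..]}[|S₁| - i₁ + i₂ + 1], |S₁| - i₁ + 1 )`. -/
theorem opLCE_eq_Ztab (S₁ S₂ : List α) :
    ∀ i₁ i₂ : ℕ, 1 ≤ i₁ → i₁ ≤ S₁.length → 1 ≤ i₂ → i₂ ≤ S₂.length →
      opLCE S₁ S₂ i₁ i₂ =
        min (Ztab ((S₁ ++ S₂).drop (i₁ - 1)) (S₁.length - i₁ + i₂ + 1))
          (S₁.length - i₁ + 1) := by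
  intro i₁ i₂ h1 h2 h3 h4
  set n := S₁.length with hn
  set m := S₂.length with hm
  set a := i₁ - 1 with ha
  set b := i₂ - 1 with hb
  set T : List α := (S₁ ++ S₂).drop a with hT
  have hTeq : T = S₁.drop a ++ S₂ := List.drop_append_of_le_length (by omega)
  have hTlen : T.length = (n - a) + m := by
    rw [hTeq]; simp [hn, hm]
  -- T.take l agrees with (S₁.drop a).take l for l ≤ n - a
  have htake : ∀ l, l ≤ n - a → T.take l = (S₁.drop a).take l := by
    intro l hl
    rw [hTeq, List.take_append_of_le_length (by simp; omega)]
  -- the drop inside Ztab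
  have hdrop : T.drop (n - i₁ + i₂ + 1 - 1) = S₂.drop b := by
    rw [hT, List.drop_drop]
    have : a + (n - i₁ + i₂ + 1 - 1) = n + b := by omega
    rw [this, ← List.drop_drop]
    show List.drop b (List.drop S₁.length (S₁ ++ S₂)) = _
    rw [List.drop_left]
  -- membership characterizations
  set A : Set ℕ := {l | a + l ≤ n ∧ b + l ≤ m ∧
      OIL ((S₁.drop a).take l) ((S₂.drop b).take l)} with hA
  set B : Set ℕ := {l | n - i₁ + i₂ + 1 - 1 + l ≤ T.length ∧
      OIL (T.take l) ((T.drop (n - i₁ + i₂ + 1 - 1)).take l)} with hB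
  have hBiff : ∀ l, l ∈ B ↔ b + l ≤ m ∧ OIL (T.take l) ((S₂.drop b).take l) := by
    intro l
    rw [hB, Set.mem_setOf_eq, hdrop, hTlen]
    constructor
    · rintro ⟨h5, h6⟩; exact ⟨by omega, h6⟩
    · rintro ⟨h5, h6⟩; exact ⟨by omega, h6⟩
  have hopA : opLCE S₁ S₂ i₁ i₂ = sSup A := rfl
  have hZB : Ztab T (n - i₁ + i₂ + 1) = sSup B := rfl
  have hbddA : BddAbove A := ⟨n, fun l hl => by have := hl.1; omega⟩
  have hbddB : BddAbove B := ⟨m, fun l hl => by have := ((hBiff l).1 hl).1; omega⟩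
  have h0A : (0 : ℕ) ∈ A := by
    refine ⟨by omega, by omega, ?_⟩
    simp [OIL_nil]
  have h0B : (0 : ℕ) ∈ B := by
    rw [hBiff]
    refine ⟨by omega, ?_⟩
    simp [OIL_nil]
  have hsA : sSup A ∈ A := Nat.sSup_mem ⟨0, h0A⟩ hbddA
  have hsB : sSup B ∈ B := Nat.sSup_mem ⟨0, h0B⟩ hbddB
  rw [hopA, hZB]
  apply le_antisymm
  · apply le_min
    · -- sSup A ≤ sSup B
      apply le_csSup hbddB
      rw [hBiff]
      obtain ⟨hx1, hx2, hx3⟩ := hsA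
      exact ⟨hx2, by rwa [htake _ (by omega)]⟩
    · have := hsA.1; omega
  · obtain ⟨hz1, hz2⟩ := (hBiff _).1 hsB
    set L := min (sSup B) (n - i₁ + 1) with hL
    apply le_csSup hbddA
    refine ⟨by omega, by omega, ?_⟩
    have h5 := hz2.take L
    rw [List.take_take, List.take_take, min_eq_left (by omega),
      htake _ (by omega)] at h5
    exact h5
end

section
/- Let H be the 2d-Min-Heap of X (parent(i) = max{j < i : X[j] < X[i]}, X[0] = -∞). For 1 ≤ i₁ ≤ i₂ ≤ n, let u = LCA(i₁, i₂) in H. If u = i₁, then i₁ is a position of a minimum of X[i₁..i₂] (taking the rightmost minimum under ties appropriately: the answer of rmq(i₁,i₂)). Otherwise, the child of u that is an ancestor of i₂ is a position achieving the minimum of X[i₁..i₂]. -/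
variable {α : Type*} [LinearOrder α]

/-- The parent of node `i ≥ 1` in the 2d-Min-Heap of `X` (with `X 0 = ⊥` playing the
role of `-∞`): the largest `j < i` with `X j < X i`. -/
noncomputable def heapParent (X : ℕ → WithBot α) (i : ℕ) : ℕ :=
  Nat.findGreatest (fun j => X j < X i) (i - 1)

/-- `HeapAnc X a d` : node `a` is a (reflexive) ancestor of node `d` in the
2d-Min-Heap of `X`, i.e. `a` is reachable from `d` by repeatedly taking parents. -/
def HeapAnc (X : ℕ → WithBot α) (a d : ℕ) : Prop :=
  Relation.ReflTransGen (fun x y => x ≠ 0 ∧ y = heapParent X x) d a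

lemma heapParent_lt {X : ℕ → WithBot α} {i : ℕ} (hi : 1 ≤ i) : heapParent X i < i :=
  lt_of_le_of_lt (Nat.findGreatest_le _) (Nat.sub_lt hi one_pos)

lemma heapParent_val_lt {X : ℕ → WithBot α} (h0 : X 0 = ⊥)
    (hne : ∀ i : ℕ, 1 ≤ i → X i ≠ ⊥) {i : ℕ} (hi : 1 ≤ i) :
    X (heapParent X i) < X i := by
  have h0i : X 0 < X i := by
    rw [h0]
    exact (WithBot.bot_lt_iff_ne_bot).2 (hne i hi)
  exact Nat.findGreatest_spec (P := fun j => X j < X i) (Nat.zero_le _) h0i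

lemma heapParent_interval {X : ℕ → WithBot α} {i t : ℕ} (hi : 1 ≤ i)
    (h1 : heapParent X i < t) (h2 : t < i) : X i ≤ X t := by
  have := Nat.findGreatest_is_greatest (P := fun j => X j < X i) h1
    (Nat.le_sub_one_of_lt h2)
  exact le_of_not_gt this

lemma heapParent_interval' {X : ℕ → WithBot α} (h0 : X 0 = ⊥)
    (hne : ∀ i : ℕ, 1 ≤ i → X i ≠ ⊥) {i t : ℕ} (hi : 1 ≤ i)
    (h1 : heapParent X i < t) (h2 : t ≤ i) : X (heapParent X i) < X t := by
  rcases eq_or_lt_of_le h2 with rfl | h2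
  · exact heapParent_val_lt h0 hne hi
  · exact lt_of_lt_of_le (heapParent_val_lt h0 hne hi) (heapParent_interval hi h1 h2)

lemma HeapAnc.le_nat {X : ℕ → WithBot α} {a d : ℕ} (h : HeapAnc X a d) : a ≤ d := by
  induction h with
  | refl => exact le_refl _
  | tail _ hbc ih =>
    exact le_trans (hbc.2 ▸ le_trans (Nat.findGreatest_le _) (Nat.sub_le _ _)) ih

lemma HeapAnc.le_val {X : ℕ → WithBot α} (h0 : X 0 = ⊥)
    (hne : ∀ i : ℕ, 1 ≤ i → X i ≠ ⊥) {a d : ℕ} (h : HeapAnc X a d) : X a ≤ X d := by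
  induction h with
  | refl => exact le_refl _
  | tail _ hbc ih =>
    rename_i b c _
    have hb1 : 1 ≤ b := Nat.one_le_iff_ne_zero.2 hbc.1
    exact le_trans (hbc.2 ▸ (heapParent_val_lt h0 hne hb1).le) ih

lemma HeapAnc.lt_val {X : ℕ → WithBot α} (h0 : X 0 = ⊥)
    (hne : ∀ i : ℕ, 1 ≤ i → X i ≠ ⊥) {a d : ℕ} (h : HeapAnc X a d) :
    ∀ t : ℕ, a < t → t ≤ d → X a < X t := by
  induction h with
  | refl => exact fun t h1 h2 => absurd (lt_of_lt_of_le h1 h2) (lt_irrefl _)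
  | tail _ hbc ih =>
    rename_i b c hdb
    intro t h1 h2
    have hb1 : 1 ≤ b := Nat.one_le_iff_ne_zero.2 hbc.1
    rcases le_or_gt t b with htb | hbt
    · exact hbc.2 ▸ heapParent_interval' h0 hne hb1 (hbc.2 ▸ h1) htb
    · calc X c < X b := hbc.2 ▸ heapParent_val_lt h0 hne hb1
        _ < X t := ih t hbt h2

lemma HeapAnc.interval {X : ℕ → WithBot α} (h0 : X 0 = ⊥)
    (hne : ∀ i : ℕ, 1 ≤ i → X i ≠ ⊥) {c d : ℕ} (h : HeapAnc X c d) :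
    ∀ m : ℕ, c ≤ m → m ≤ d → HeapAnc X c m := by
  intro m
  induction m using Nat.strong_induction_on with
  | _ m ih =>
    intro hcm hmd
    rcases eq_or_lt_of_le hcm with rfl | hcm
    · exact Relation.ReflTransGen.refl
    · have hm1 : 1 ≤ m := Nat.lt_of_le_of_lt (Nat.zero_le _) hcm
      have hXcm : X c < X m := h.lt_val h0 hne m hcm hmd
      have hcp : c ≤ heapParent X m :=
        Nat.le_findGreatest (Nat.le_sub_one_of_lt hcm) hXcm
      have hpm : heapParent X m < m := heapParent_lt hm1
      have hanc : HeapAnc X c (heapParent X m) :=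
        ih _ hpm hcp (le_trans hpm.le hmd)
      exact Relation.ReflTransGen.head ⟨Nat.one_le_iff_ne_zero.1 hm1, rfl⟩ hanc

/-- RMQ via LCA in the 2d-Min-Heap: let `u` be the lowest common ancestor of
`i₁` and `i₂` (`1 ≤ i₁ ≤ i₂ ≤ n`).  If `u = i₁`, then `i₁` is a position of a
minimum of `X[i₁..i₂]`; otherwise the child `c` of `u` that is an ancestor of
`i₂` lies in `[i₁, i₂]` and is a position of a minimum of `X[i₁..i₂]`. -/
theorem heap_rmq_via_lca (X : ℕ → WithBot α) (n : ℕ)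
    (h0 : X 0 = ⊥) (hne : ∀ i : ℕ, 1 ≤ i → X i ≠ ⊥)
    (i₁ i₂ : ℕ) (hi1 : 1 ≤ i₁) (h12 : i₁ ≤ i₂) (h2n : i₂ ≤ n)
    (u : ℕ) (hu1 : HeapAnc X u i₁) (hu2 : HeapAnc X u i₂)
    (hlca : ∀ w : ℕ, HeapAnc X w i₁ → HeapAnc X w i₂ → HeapAnc X w u) :
    (u = i₁ → ∀ t : ℕ, i₁ ≤ t → t ≤ i₂ → X i₁ ≤ X t) ∧
    (u ≠ i₁ → ∀ c : ℕ, 0 < c → heapParent X c = u → HeapAnc X c i₂ →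
      i₁ ≤ c ∧ c ≤ i₂ ∧ ∀ t : ℕ, i₁ ≤ t → t ≤ i₂ → X c ≤ X t) := by
  constructor
  · rintro rfl t ht1 ht2
    rcases eq_or_lt_of_le ht1 with rfl | ht1
    · exact le_refl _
    · exact (hu2.lt_val h0 hne t ht1 ht2).le
  · intro hune c hc0 hcp hc2
    have hc1 : 1 ≤ c := hc0
    have hui : u < i₁ := lt_of_le_of_ne hu1.le_nat hune
    have hci2 : c ≤ i₂ := hc2.le_nat
    have hic : i₁ ≤ c := by
      by_contra hlt
      push_neg at hlt
      have hci1 : HeapAnc X c i₁ := hc2.interval h0 hne i₁ hlt.le h12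
      have hcu : HeapAnc X c u := hlca c hci1 hc2
      have : c ≤ u := hcu.le_nat
      have : u < c := hcp ▸ heapParent_lt hc1
      omega
    refine ⟨hic, hci2, fun t ht1 ht2 => ?_⟩
    rcases lt_or_ge t c with htc | hct
    · exact heapParent_interval hc1 (hcp.symm ▸ lt_of_lt_of_le hui ht1) htc
    · rcases eq_or_lt_of_le hct with rfl | hct
      · exact le_refl _
      · exact (hc2.lt_val h0 hne t hct ht2).le
end

section
/- For any string X of length n with X[0] = -∞ and its 2d-Min-Heap H, every node j on the path from node i (1 ≤ i ≤ n) to the root, other than i itself, satisfies j < i and X[j] < X[i]; conversely, if j < i and X[j] < X[i'] for all i' with j < i' ≤ i, then j is an ancestor of i in H. -/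
variable {α : Type*} [LinearOrder α]

lemma heapParent_lt_and (X : ℕ → WithBot α) (h0 : X 0 = ⊥)
    (hne : ∀ i : ℕ, 1 ≤ i → X i ≠ ⊥) (b : ℕ) (hb : 1 ≤ b) :
    heapParent X b < b ∧ X (heapParent X b) < X b := by
  classical
  have hP0 : X 0 < X b := by
    rw [h0]
    exact Ne.bot_lt (hne b hb)
  constructor
  · have := Nat.findGreatest_le (P := fun j => X j < X b) (b - 1)
    unfold heapParent
    omega
  · show X (Nat.findGreatest (fun j => X j < X b) (b - 1)) < X b
    exact Nat.findGreatest_spec (P := fun j => X j < X b) (Nat.zero_le _) hP0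

lemma heapAnc_of (X : ℕ → WithBot α) (h0 : X 0 = ⊥)
    (hne : ∀ i : ℕ, 1 ≤ i → X i ≠ ⊥) :
    ∀ i, 1 ≤ i → ∀ j, j < i → (∀ i' : ℕ, j < i' → i' ≤ i → X j < X i') →
      HeapAnc X j i := by
  classical
  intro i
  induction i using Nat.strong_induction_on with
  | _ i IH =>
    intro hi j hj hall
    set p := heapParent X i with hp
    obtain ⟨hplt, hpX⟩ := heapParent_lt_and X h0 hne i hi
    have hjp : j ≤ p := by
      exact Nat.le_findGreatest (P := fun j => X j < X i) (by omega) (hall i hj le_rfl)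
    have hstep : (fun x y => x ≠ 0 ∧ y = heapParent X x) i p :=
      ⟨by omega, rfl⟩
    rcases eq_or_lt_of_le hjp with h | h
    · exact Relation.ReflTransGen.single (h ▸ hstep)
    · have : HeapAnc X j p := by
        apply IH p hplt (by omega) j h
        intro i' h1 h2
        exact hall i' h1 (by omega)
      exact Relation.ReflTransGen.head hstep this

/-- Characterization of ancestors in the 2d-Min-Heap: every node `j ≠ i` on the
path from `i` to the root satisfies `j < i` and `X j < X i`; conversely, if
`j < i` and `X j < X i'` for all `i'` with `j < i' ≤ i`, then `j` is an
ancestor of `i`. -/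
theorem heap_path_characterization (X : ℕ → WithBot α)
    (h0 : X 0 = ⊥) (hne : ∀ i : ℕ, 1 ≤ i → X i ≠ ⊥)
    (i : ℕ) (hi : 1 ≤ i) :
    (∀ j : ℕ, HeapAnc X j i → j ≠ i → j < i ∧ X j < X i) ∧
    (∀ j : ℕ, j < i → (∀ i' : ℕ, j < i' → i' ≤ i → X j < X i') → HeapAnc X j i) := by
  constructor
  · intro j hanc
    induction hanc with
    | refl => intro h; exact absurd rfl h
    | tail hbc hstep IH =>
      rename_i b c
      intro _
      obtain ⟨hb0, hc⟩ := hstep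
      obtain ⟨hlt, hX⟩ := heapParent_lt_and X h0 hne b (by omega)
      rcases eq_or_ne b i with rfl | hbi
      · exact hc ▸ ⟨hlt, hX⟩
      · obtain ⟨h1, h2⟩ := IH hbi
        exact hc ▸ ⟨by omega, lt_trans hX h2⟩
  · exact heapAnc_of X h0 hne i hi
end
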